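/- Let L̂ be a finite atomic lattice, mi(L) its set of meet-irreducible proper elements, and J(mi(L)) the distributive lattice of order filters of mi(L) ordered by reverse inclusion. Then the map sending a ∈ L̂ − {0̂} to the order filter ↑a ∩ mi(L) (equivalently, the filter of mi(L) generated by { k ∈ mi(L) : a ≤ k }) is an injective join-preserving map from L − {0̂} ∪ {1̂} into J(mi(L)). Hence L̂ − {0̂} embeds as a join subsemilattice of a distributive lattice whose meet-irreducibles are mi(L). -/

import Mathlib

/-- Meet-irreducible proper elements of a bounded lattice. -/
def MeetIrred (L : Type*) [Lattice L] [BoundedOrder L] : Set L :=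
  {l | l ≠ ⊥ ∧ l ≠ ⊤ ∧ ∀ a b : L, l = a ⊓ b → l = a ∨ l = b}

/-- The map `a ↦ ↑a ∩ mi(L)` from `L̂` to the distributive lattice
`J(mi(L))` of order filters of `mi(L)` ordered by reverse inclusion
(in Mathlib, `UpperSet` is ordered by reverse inclusion). -/
def phiJ {L : Type*} [Lattice L] [BoundedOrder L] (a : L) :
    UpperSet ↥(MeetIrred L) :=
  ⟨{l | a ≤ ↑l}, fun _ _ huv hu => le_trans hu huv⟩

/-- In a finite lattice, every non-bottom element is the infimum of the
meet-irreducible proper elements above it. -/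
lemma eq_sInf_meetIrred {L : Type*} [CompleteLattice L] [Fintype L] :
    ∀ a : L, a ≠ ⊥ → a = sInf {m | m ∈ MeetIrred L ∧ a ≤ m} := by
  intro a
  induction a using WellFoundedGT.induction with
  | _ a ih =>
  intro ha
  refine le_antisymm (le_sInf fun m hm => hm.2) ?_
  by_cases htop : a = ⊤
  · exact htop ▸ le_top
  by_cases hmi : a ∈ MeetIrred L
  · exact sInf_le ⟨hmi, le_refl a⟩
  · have : ∃ b c : L, a = b ⊓ c ∧ a ≠ b ∧ a ≠ c := by
      simp only [MeetIrred, Set.mem_setOf_eq, not_and, not_forall] at hmi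
      obtain ⟨b, c, h1, h2⟩ := hmi ha htop
      exact ⟨b, c, h1, not_or.mp h2⟩
    obtain ⟨b, c, habc, hab, hac⟩ := this
    have hlb : a < b := lt_of_le_of_ne (habc ▸ inf_le_left) hab
    have hlc : a < c := lt_of_le_of_ne (habc ▸ inf_le_right) hac
    have hb : b ≠ ⊥ := fun h => ha (le_bot_iff.mp (h ▸ hlb.le))
    have hc : c ≠ ⊥ := fun h => ha (le_bot_iff.mp (h ▸ hlc.le))
    have ihb := ih b hlb hb
    have ihc := ih c hlc hc
    have h1 : sInf {m | m ∈ MeetIrred L ∧ a ≤ m} ≤ b := by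
      rw [ihb]; exact sInf_le_sInf fun m hm => ⟨hm.1, hlb.le.trans hm.2⟩
    have h2 : sInf {m | m ∈ MeetIrred L ∧ a ≤ m} ≤ c := by
      rw [ihc]; exact sInf_le_sInf fun m hm => ⟨hm.1, hlc.le.trans hm.2⟩
    exact (le_inf h1 h2).trans habc.ge

/-- `a ↦ ↑a ∩ mi(L)` is an injective join-preserving map from `L̂ − {0̂}` into
the distributive lattice `J(mi(L))` of order filters of `mi(L)` under reverse
inclusion; hence `L̂ − {0̂}` embeds as a join subsemilattice of a distributive
lattice whose meet-irreducibles form `mi(L)`. -/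
theorem stmt9 {L : Type*} [CompleteLattice L] [Fintype L] [IsAtomistic L] :
    Set.InjOn (phiJ (L := L)) {a : L | a ≠ ⊥} ∧
    (∀ a b : L, phiJ (a ⊔ b) = phiJ a ⊔ phiJ b) := by
  constructor
  · intro a ha b hb hab
    have hsets : {m | m ∈ MeetIrred L ∧ a ≤ m} = {m | m ∈ MeetIrred L ∧ b ≤ m} := by
      ext m
      constructor
      · rintro ⟨hm, hle⟩
        have : (⟨m, hm⟩ : ↥(MeetIrred L)) ∈ (phiJ a : UpperSet ↥(MeetIrred L)).carrier := hle
        rw [hab] at this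
        exact ⟨hm, this⟩
      · rintro ⟨hm, hle⟩
        have : (⟨m, hm⟩ : ↥(MeetIrred L)) ∈ (phiJ b : UpperSet ↥(MeetIrred L)).carrier := hle
        rw [← hab] at this
        exact ⟨hm, this⟩
    calc a = sInf {m | m ∈ MeetIrred L ∧ a ≤ m} := eq_sInf_meetIrred a ha
    _ = sInf {m | m ∈ MeetIrred L ∧ b ≤ m} := by rw [hsets]
    _ = b := (eq_sInf_meetIrred b hb).symm
  · intro a b
    ext l
    simp [phiJ, sup_le_iff]
    exact Iff.rfl
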